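/- Let n ≥ 1 and w : Fin n → ℝ, let U_w be the 2^n × 2^n diagonal matrix with entries U_w[b,b] = exp(2πi ∑_j w_j b_j), and let ψ₊ : 𝔽₂ⁿ → ℂ be the uniform-superposition unit vector ψ₊(b) = 2^{−n/2}. Then for every x, z ∈ 𝔽₂ⁿ: if the support of z is contained in the support of x, then ⟨U_w ψ₊, P(x,z) (U_w ψ₊)⟩ = ∏_{j : x_j = 1} cos(2π w_j)^{1−z_j} · sin(2π w_j)^{z_j}; otherwise ⟨U_w ψ₊, P(x,z) (U_w ψ₊)⟩ = 0. In particular, |⟨U_w ψ₊, P(x,z) (U_w ψ₊)⟩| = ∏_{j=1}^n |1 + exp(2πi (2 w_j x_j + z_j / 2))| / 2, where x_j, z_j ∈ {0,1} are the representatives. -/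

import Mathlib

open scoped BigOperators

/-- The Pauli expectation value `⟨ψ, P(x,z) ψ⟩`. -/
noncomputable def pauliExp (n : ℕ) (x z : Fin n → ZMod 2)
    (ψ : (Fin n → ZMod 2) → ℂ) : ℂ :=
  ∑ b : Fin n → ZMod 2,
    (starRingEnd ℂ) (ψ (b + x)) * Complex.I ^ (∑ j, (x j).val * (z j).val) *
      (-1 : ℂ) ^ (∑ j, (z j).val * (b j).val) * ψ b

/-- The single-qubit `Z`-rotation (SQR) layer `U_w|b⟩ = e^{2πi w·b}|b⟩`. -/
noncomputable def sqrGate (n : ℕ) (w : Fin n → ℝ) :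
    Matrix (Fin n → ZMod 2) (Fin n → ZMod 2) ℂ :=
  Matrix.diagonal fun b =>
    Complex.exp (((2 * Real.pi * ∑ j, w j * ((b j).val : ℝ) : ℝ) : ℂ) * Complex.I)

/-- The uniform-superposition unit vector `ψ₊ = |+⟩^⊗n`, `ψ₊(b) = 2^{−n/2}`. -/
noncomputable def psiPlus (n : ℕ) : (Fin n → ZMod 2) → ℂ :=
  fun _ => (((Real.sqrt (2 ^ n))⁻¹ : ℝ) : ℂ)

noncomputable def gfac (wj : ℝ) (a c : ZMod 2) (v : ZMod 2) : ℂ :=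
  (2:ℂ)⁻¹ * Complex.exp (-(((2 * Real.pi * (wj * (((v + a).val : ℕ) : ℝ)) : ℝ) : ℂ)) * Complex.I)
    * Complex.I ^ (a.val * c.val) * (-1:ℂ) ^ (c.val * v.val)
    * Complex.exp (((2 * Real.pi * (wj * ((v.val : ℕ) : ℝ)) : ℝ) : ℂ) * Complex.I)

lemma exp_split (n : ℕ) (θ : Fin n → ℝ) :
    Complex.exp (((2 * Real.pi * ∑ j, θ j : ℝ) : ℂ) * Complex.I)
      = ∏ j, Complex.exp (((2 * Real.pi * θ j : ℝ) : ℂ) * Complex.I) := by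
  rw [← Complex.exp_sum]
  congr 1
  push_cast [Finset.mul_sum]
  rw [Finset.sum_mul]

lemma exp_split_neg (n : ℕ) (θ : Fin n → ℝ) :
    Complex.exp (-(((2 * Real.pi * ∑ j, θ j : ℝ) : ℂ)) * Complex.I)
      = ∏ j, Complex.exp (-(((2 * Real.pi * θ j : ℝ) : ℂ)) * Complex.I) := by
  rw [← Complex.exp_sum]
  congr 1
  push_cast [Finset.mul_sum]
  rw [← Finset.sum_neg_distrib, Finset.sum_mul]

lemma key (n : ℕ) (w : Fin n → ℝ) (x z : Fin n → ZMod 2) :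
    pauliExp n x z ((sqrGate n w).mulVec (psiPlus n))
      = ∏ j, ∑ v : ZMod 2, gfac (w j) (x j) (z j) v := by
  have hps := Finset.prod_univ_sum (ι := Fin n) (κ := fun _ => ZMod 2)
    (fun _ => (Finset.univ : Finset (ZMod 2))) (fun j v => gfac (w j) (x j) (z j) v)
  rw [Fintype.piFinset_univ] at hps
  rw [hps]
  unfold pauliExp
  refine Finset.sum_congr rfl fun b _ => ?_
  simp only [sqrGate, psiPlus, Matrix.mulVec_diagonal, map_mul, ← Complex.exp_conj,
    Complex.conj_ofReal, map_mul, Complex.conj_I, Pi.add_apply]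
  simp only [gfac, Finset.prod_mul_distrib, Finset.prod_const,
    Finset.prod_pow_eq_pow_sum, ← exp_split, ← exp_split_neg]
  simp only [Finset.card_univ, Fintype.card_fin]
  have hc : (((Real.sqrt (2 ^ n))⁻¹ : ℝ) : ℂ) * (((Real.sqrt (2 ^ n))⁻¹ : ℝ) : ℂ)
      = (2:ℂ)⁻¹ ^ n := by
    rw [← Complex.ofReal_mul, ← mul_inv, Real.mul_self_sqrt (by positivity), ← inv_pow]
    push_cast
    ring
  rw [← hc, mul_neg, ← neg_mul]
  ring

noncomputable def Sval (wj : ℝ) (a c : ZMod 2) : ℂ :=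
  if a = 0 then (if c = 0 then 1 else 0)
  else ((Real.cos (2 * Real.pi * wj) ^ (1 - c.val) *
      Real.sin (2 * Real.pi * wj) ^ c.val : ℝ) : ℂ)

lemma sum_zmod2 (g : ZMod 2 → ℂ) : ∑ v : ZMod 2, g v = g 0 + g 1 := by
  rw [show (Finset.univ : Finset (ZMod 2)) = {0, 1} by decide]
  simp

lemma gfac_sum (wj : ℝ) (a c : ZMod 2) :
    ∑ v : ZMod 2, gfac wj a c v = Sval wj a c := by
  have h2 : ∀ u : ZMod 2, u = 0 ∨ u = 1 := by decide
  rw [sum_zmod2]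
  rcases h2 a with ha | ha <;> rcases h2 c with hc | hc <;> subst ha <;> subst hc <;>
    simp only [gfac, Sval, ZMod.val_zero, ZMod.val_one, if_true, if_false, add_zero, zero_add,
      Nat.cast_zero, Nat.cast_one, mul_zero, zero_mul, mul_one, one_mul, pow_zero, pow_one,
      Complex.ofReal_zero, neg_zero, Complex.exp_zero, show ((1:ZMod 2)+1 = 0) by decide,
      reduceIte, one_ne_zero]
  all_goals
    have he : Complex.exp (-((2 * Real.pi * wj : ℝ) : ℂ) * Complex.I) *
        Complex.exp (((2 * Real.pi * wj : ℝ) : ℂ) * Complex.I) = 1 := by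
      rw [← Complex.exp_add]
      ring_nf
      exact Complex.exp_zero
  · linear_combination (2:ℂ)⁻¹ * he
  · linear_combination -(2:ℂ)⁻¹ * he
  · norm_num [Complex.ofReal_cos, Complex.cos]
    ring
  · norm_num [Complex.ofReal_sin, Complex.sin]
    ring

lemma abs_one_add_exp (s : ℝ) :
    ‖1 + Complex.exp (((2 * s : ℝ) : ℂ) * Complex.I)‖ = 2 * |Real.cos s| := by
  have e1 : Complex.exp ((s : ℂ) * Complex.I) * Complex.exp ((s : ℂ) * Complex.I)
      = Complex.exp (((2 * s : ℝ) : ℂ) * Complex.I) := by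
    rw [← Complex.exp_add]; congr 1; push_cast; ring
  have e2 : Complex.exp ((s : ℂ) * Complex.I) * Complex.exp (-(s : ℂ) * Complex.I) = 1 := by
    rw [← Complex.exp_add]; ring_nf; exact Complex.exp_zero
  have h : (1 : ℂ) + Complex.exp (((2 * s : ℝ) : ℂ) * Complex.I)
      = Complex.exp ((s : ℂ) * Complex.I) * (2 * Complex.cos s) := by
    rw [Complex.cos]
    linear_combination -e1 - e2
  rw [h, norm_mul, Complex.norm_exp_ofReal_mul_I, one_mul, norm_mul, Complex.norm_two,
    ← Complex.ofReal_cos, Complex.norm_real, Real.norm_eq_abs]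

/-- Pauli spectrum of an SQR layer acting on `|+⟩^⊗n`: if `supp z ⊆ supp x` the
expectation value is `∏_{j : x_j = 1} cos(2πw_j)^{1−z_j} sin(2πw_j)^{z_j}`, otherwise it
vanishes; in particular its modulus is `∏_j |1 + e^{2πi(2w_j x_j + z_j/2)}| / 2`. -/
theorem stmt14 (n : ℕ) (hn : 1 ≤ n) (w : Fin n → ℝ) (x z : Fin n → ZMod 2) :
    ((∀ j, x j = 0 → z j = 0) →
      pauliExp n x z ((sqrGate n w).mulVec (psiPlus n)) =
        ((∏ j ∈ Finset.univ.filter (fun j : Fin n => x j = 1),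
          Real.cos (2 * Real.pi * w j) ^ (1 - (z j).val) *
            Real.sin (2 * Real.pi * w j) ^ ((z j).val) : ℝ) : ℂ)) ∧
    ((¬ ∀ j, x j = 0 → z j = 0) →
      pauliExp n x z ((sqrGate n w).mulVec (psiPlus n)) = 0) ∧
    ‖pauliExp n x z ((sqrGate n w).mulVec (psiPlus n))‖ =
      ∏ j : Fin n,
        ‖1 + Complex.exp
          (((2 * Real.pi * (2 * w j * ((x j).val : ℝ) + ((z j).val : ℝ) / 2) : ℝ) : ℂ)
            * Complex.I)‖ / 2 := by
  have h2 : ∀ u : ZMod 2, u = 0 ∨ u = 1 := by decide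
  have hE : pauliExp n x z ((sqrGate n w).mulVec (psiPlus n))
      = ∏ j, Sval (w j) (x j) (z j) := by
    rw [key]; exact Finset.prod_congr rfl fun j _ => gfac_sum _ _ _
  refine ⟨fun h => ?_, fun h => ?_, ?_⟩
  · rw [hE, ← Finset.prod_filter_mul_prod_filter_not Finset.univ (fun j => x j = 1)]
    have h1 : (∏ j ∈ Finset.univ.filter (fun j => ¬ x j = 1), Sval (w j) (x j) (z j)) = 1 := by
      refine Finset.prod_eq_one fun j hj => ?_
      simp only [Finset.mem_filter] at hj
      have hx0 : x j = 0 := (h2 (x j)).resolve_right hj.2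
      simp [Sval, hx0, h j hx0]
    rw [h1, mul_one, Complex.ofReal_prod]
    refine Finset.prod_congr rfl fun j hj => ?_
    simp only [Finset.mem_filter] at hj
    simp [Sval, hj.2]
  · push_neg at h
    obtain ⟨j, hx0, hz⟩ := h
    have hz1 : z j = 1 := (h2 (z j)).resolve_left hz
    rw [hE]
    exact Finset.prod_eq_zero (Finset.mem_univ j) (by simp [Sval, hx0, hz1])
  · rw [hE, norm_prod]
    refine Finset.prod_congr rfl fun j _ => ?_
    rcases h2 (x j) with hx | hx <;> rcases h2 (z j) with hz | hz <;> rw [hx, hz] <;>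
      simp only [ZMod.val_zero, ZMod.val_one, Nat.cast_zero, Nat.cast_one]
    · rw [show (2 * Real.pi * (2 * w j * 0 + 0 / 2) : ℝ) = 2 * 0 by ring, abs_one_add_exp]
      norm_num [Sval]
    · rw [show (2 * Real.pi * (2 * w j * 0 + 1 / 2) : ℝ) = 2 * (Real.pi / 2) by ring,
        abs_one_add_exp]
      norm_num [Sval, Real.cos_pi_div_two]
    · rw [show (2 * Real.pi * (2 * w j * 1 + 0 / 2) : ℝ) = 2 * (2 * Real.pi * w j) by ring,
        abs_one_add_exp]
      rw [show Sval (w j) 1 0 = ((Real.cos (2 * Real.pi * w j) : ℝ) : ℂ) by simp only [Sval, ZMod.val_zero, one_ne_zero, if_false]; norm_num]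
      rw [Complex.norm_real, Real.norm_eq_abs]
      ring
    · rw [show (2 * Real.pi * (2 * w j * 1 + 1 / 2) : ℝ)
          = 2 * (2 * Real.pi * w j + Real.pi / 2) by ring, abs_one_add_exp]
      rw [show Sval (w j) 1 1 = ((Real.sin (2 * Real.pi * w j) : ℝ) : ℂ) by simp only [Sval, ZMod.val_one, one_ne_zero, if_false]; norm_num]
      rw [Complex.norm_real, Real.norm_eq_abs, Real.cos_add_pi_div_two, abs_neg]
      ring
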